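/- (Kernel-distance bound on the empirical IPM for square loss.) Define φ : ℝ^d × ℝ → ℝ^{d²+d+1} by φ(u, y) = (vec(uuᵀ), √2·y·u, y²). Let {(ψ_i, y_i)}_{i=1}^{m} and {(ψ'_i, y'_i)}_{i=1}^{n} be two finite samples in ℝ^d × ℝ with nonnegative weights a_i and b_i respectively. Then for every w ∈ ℝ^d with ‖w‖₂ ≤ 1, |∑_{i=1}^{m} a_i·(1/2)(⟨w, ψ_i⟩ − y_i)² − ∑_{i=1}^{n} b_i·(1/2)(⟨w, ψ'_i⟩ − y'_i)²| ≤ ‖∑_{i=1}^{m} a_i φ(ψ_i, y_i) − ∑_{i=1}^{n} b_i φ(ψ'_i, y'_i)‖₂. -/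

import Mathlib

open scoped InnerProductSpace

/-- The feature map `φ(u, y) = (vec(uuᵀ), √2·y·u, y²)` taking values in the Euclidean
space `ℝ^{d²} × ℝ^d × ℝ ≅ ℝ^{d²+d+1}` (indexed by `(Fin d × Fin d) ⊕ Fin d ⊕ Unit`). -/
noncomputable def phiSq {d : ℕ} (u : EuclideanSpace ℝ (Fin d)) (y : ℝ) :
    EuclideanSpace ℝ ((Fin d × Fin d) ⊕ Fin d ⊕ Unit) :=
  (WithLp.equiv 2 _).symm
    (Sum.elim (fun p => u p.1 * u p.2)
      (Sum.elim (fun i => Real.sqrt 2 * y * u i) fun _ => y ^ 2))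

/-- test vector -/
noncomputable def thetaSq {d : ℕ} (w : EuclideanSpace ℝ (Fin d)) :
    EuclideanSpace ℝ ((Fin d × Fin d) ⊕ Fin d ⊕ Unit) :=
  (WithLp.equiv 2 _).symm
    (Sum.elim (fun p => w p.1 * w p.2 / 2)
      (Sum.elim (fun i => -(w i) / Real.sqrt 2) fun _ => 1 / 2))

lemma inner_theta_phi {d : ℕ} (w u : EuclideanSpace ℝ (Fin d)) (y : ℝ) :
    ⟪thetaSq w, phiSq u y⟫_ℝ = (1 / 2 : ℝ) * (⟪w, u⟫_ℝ - y) ^ 2 := by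
  simp only [thetaSq, phiSq, PiLp.inner_apply, RCLike.inner_apply', conj_trivial,
    WithLp.equiv_symm_apply, PiLp.toLp_apply, Fintype.sum_sum_type]
  simp only [Sum.elim_inl, Sum.elim_inr]
  have h2 : Real.sqrt 2 ≠ 0 := by positivity
  have hs : ∀ i : Fin d, -w i / Real.sqrt 2 * (Real.sqrt 2 * y * u i) = -(y * (w i * u i)) := by
    intro i; field_simp
  rw [Finset.sum_congr rfl (fun i _ => hs i)]
  have hprod : ∑ p : Fin d × Fin d, w p.1 * w p.2 / 2 * (u p.1 * u p.2)
      = (∑ i, w i * u i) * (∑ i, w i * u i) / 2 := by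
    rw [Finset.sum_mul_sum, Fintype.sum_prod_type, Finset.sum_div]
    refine Finset.sum_congr rfl fun i _ => ?_
    rw [Finset.sum_div]
    refine Finset.sum_congr rfl fun j _ => ?_
    ring
  rw [hprod, Finset.sum_neg_distrib, ← Finset.mul_sum]
  rw [Finset.sum_const, Finset.card_univ, Fintype.card_unit, one_nsmul]
  ring

lemma norm_thetaSq_le {d : ℕ} (w : EuclideanSpace ℝ (Fin d)) (hw : ‖w‖ ≤ 1) :
    ‖thetaSq w‖ ≤ 1 := by
  set S : ℝ := ∑ i, w i * w i with hS
  have hSnn : 0 ≤ S := Finset.sum_nonneg fun i _ => mul_self_nonneg _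
  have hself : ⟪thetaSq w, thetaSq w⟫_ℝ = (S / 2 + 1 / 2) ^ 2 := by
    simp only [thetaSq, PiLp.inner_apply, RCLike.inner_apply', conj_trivial,
      WithLp.equiv_symm_apply, PiLp.toLp_apply, Fintype.sum_sum_type, Sum.elim_inl, Sum.elim_inr]
    have hs : ∀ i : Fin d, -w i / Real.sqrt 2 * (-w i / Real.sqrt 2) = w i * w i / 2 := by
      intro i
      rw [div_mul_div_comm, Real.mul_self_sqrt (by norm_num)]
      ring
    rw [Finset.sum_congr rfl (fun i _ => hs i)]
    have hprod : ∑ p : Fin d × Fin d, w p.1 * w p.2 / 2 * (w p.1 * w p.2 / 2)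
        = S * S / 4 := by
      rw [hS, Finset.sum_mul_sum, Fintype.sum_prod_type, Finset.sum_div]
      refine Finset.sum_congr rfl fun i _ => ?_
      rw [Finset.sum_div]
      refine Finset.sum_congr rfl fun j _ => ?_
      ring
    rw [hprod, ← Finset.sum_div, Finset.sum_const, Finset.card_univ, Fintype.card_unit,
      one_nsmul]
    ring
  have hnorm : ‖thetaSq w‖ ^ 2 = (S / 2 + 1 / 2) ^ 2 := by
    rw [← hself, ← real_inner_self_eq_norm_sq]
  have hSw : S = ‖w‖ ^ 2 := by
    rw [hS, ← real_inner_self_eq_norm_sq]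
    simp only [PiLp.inner_apply, RCLike.inner_apply', conj_trivial]
  have hSle : S ≤ 1 := by
    rw [hSw]
    nlinarith [norm_nonneg w]
  nlinarith [hnorm, norm_nonneg (thetaSq w), hSnn, hSle]
/-- Kernel-distance bound on the empirical IPM for square loss: the weighted difference of
square losses of a norm-bounded linear model on two weighted samples is bounded by the
empirical kernel distance (MMD) between the samples for the kernel induced by `φ`. -/
theorem square_loss_ipm_le_kernel_distance {d : ℕ} (m n : ℕ)
    (a : Fin m → ℝ) (ψ : Fin m → EuclideanSpace ℝ (Fin d)) (y : Fin m → ℝ)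
    (b : Fin n → ℝ) (ψ' : Fin n → EuclideanSpace ℝ (Fin d)) (y' : Fin n → ℝ)
    (ha : ∀ i, 0 ≤ a i) (hb : ∀ i, 0 ≤ b i)
    (w : EuclideanSpace ℝ (Fin d)) (hw : ‖w‖ ≤ 1) :
    |(∑ i, a i * ((1 / 2 : ℝ) * (⟪w, ψ i⟫_ℝ - y i) ^ 2)) -
        ∑ i, b i * ((1 / 2 : ℝ) * (⟪w, ψ' i⟫_ℝ - y' i) ^ 2)| ≤
      ‖(∑ i, a i • phiSq (ψ i) (y i)) - ∑ i, b i • phiSq (ψ' i) (y' i)‖ := by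
  have key : (∑ i, a i * ((1 / 2 : ℝ) * (⟪w, ψ i⟫_ℝ - y i) ^ 2)) -
      ∑ i, b i * ((1 / 2 : ℝ) * (⟪w, ψ' i⟫_ℝ - y' i) ^ 2)
      = ⟪thetaSq w, (∑ i, a i • phiSq (ψ i) (y i)) - ∑ i, b i • phiSq (ψ' i) (y' i)⟫_ℝ := by
    rw [inner_sub_right, inner_sum, inner_sum]
    simp only [real_inner_smul_right, inner_theta_phi]
  rw [key]
  calc |⟪thetaSq w, (∑ i, a i • phiSq (ψ i) (y i)) - ∑ i, b i • phiSq (ψ' i) (y' i)⟫_ℝ|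
      ≤ ‖thetaSq w‖ * ‖(∑ i, a i • phiSq (ψ i) (y i)) - ∑ i, b i • phiSq (ψ' i) (y' i)‖ :=
        abs_real_inner_le_norm _ _
    _ ≤ 1 * _ := mul_le_mul_of_nonneg_right (norm_thetaSq_le w hw) (norm_nonneg _)
    _ = _ := one_mul _
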